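/- (RNM-Gaussian.) Let m ≥ 1, α > 1, σ > 0, and let μ = N(0, σ²) be the centered Gaussian measure on ℝ with variance σ². For C : Fin m → ℝ define P_i(C) = μ^⊗m({ r : for all j ≠ i, C i + r i > C j + r j }). Then for any C, C' : Fin m → ℝ with |C i − C' i| ≤ 1 for all i, Σ_{i=1}^{m} P_i(C)^α · P_i(C')^{1−α} ≤ m · exp( 2·α·(α − 1)/σ² ); equivalently, Report-Noisy-Max with Gaussian noise N(0, σ²) satisfies (α, 2α/σ² + (log m)/(α − 1))-RDP. -/

import Mathlib

open MeasureTheory ProbabilityTheory Real Set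
open scoped ENNReal NNReal

/-- Fubini for products of one-coordinate functions over `Measure.pi` on `Fin n → ℝ`. -/
lemma rnm_lintegral_pi_prod : ∀ {n : ℕ} (μ : Fin n → Measure ℝ) [∀ i, SigmaFinite (μ i)]
    (h : Fin n → ℝ → ℝ≥0∞), (∀ j, Measurable (h j)) →
    ∫⁻ r, ∏ j, h j (r j) ∂Measure.pi μ = ∏ j, ∫⁻ x, h j x ∂μ j := by
  intro n
  induction n with
  | zero =>
    intro μ _ h hh
    simp [Measure.pi_of_empty]
  | succ n ih =>
    intro μ _ h hh
    have hF : Measurable fun r : Fin (n + 1) → ℝ => ∏ j, h j (r j) :=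
      Finset.measurable_prod _ fun j _ => (hh j).comp (measurable_pi_apply j)
    have hmp := ((measurePreserving_piFinSuccAbove μ 0).symm
      (MeasurableEquiv.piFinSuccAbove (fun _ : Fin (n + 1) => ℝ) 0))
    rw [← hmp.map_eq, lintegral_map hF (MeasurableEquiv.measurable _)]
    have heq : ∀ p : ℝ × (Fin n → ℝ),
        (∏ j, h j (((MeasurableEquiv.piFinSuccAbove (fun _ : Fin (n+1) => ℝ) 0).symm p) j))
          = h 0 p.1 * ∏ j : Fin n, h j.succ (p.2 j) := by
      intro p
      rw [Fin.prod_univ_succ]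
      simp [MeasurableEquiv.piFinSuccAbove_symm_apply, Fin.insertNth_zero, Fin.cons_succ]
    simp_rw [heq]
    rw [lintegral_prod_mul (f := fun x => h 0 x)
      (g := fun y : Fin n → ℝ => ∏ j : Fin n, h j.succ (y j)) ((hh 0).aemeasurable)
      ((Finset.measurable_prod _ fun j _ => (hh j.succ).comp (measurable_pi_apply j)).aemeasurable)]
    simp only [Fin.succAbove_zero]
    rw [ih (fun j => μ j.succ) (fun j => h j.succ) (fun j => hh j.succ), Fin.prod_univ_succ]

section OneDim

variable {v : ℝ≥0} (hv : v ≠ 0)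

noncomputable def rnmRatio (v : ℝ≥0) (x : ℝ) : ℝ≥0∞ :=
  ENNReal.ofReal (Real.exp ((4 * x - 4) / (2 * (v : ℝ))))

lemma rnmRatio_measurable : Measurable (rnmRatio v) := by
  unfold rnmRatio
  fun_prop

lemma rnm_pdf_mul (x : ℝ) (hv : v ≠ 0) :
    gaussianPDF 0 v x * rnmRatio v x = gaussianPDF 2 v x := by
  have hv' : (0 : ℝ) < (v : ℝ) := by positivity
  rw [gaussianPDF, gaussianPDF, rnmRatio, ← ENNReal.ofReal_mul (gaussianPDFReal_nonneg _ _ _)]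
  congr 1
  rw [gaussianPDFReal, gaussianPDFReal, mul_assoc, ← Real.exp_add]
  congr 1
  field_simp
  ring

lemma rnm_set_lintegral_ratio {s : Set ℝ} (hs : MeasurableSet s) (hv : v ≠ 0) :
    ∫⁻ x in s, rnmRatio v x ∂(gaussianReal 0 v) = gaussianReal 2 v s := by
  rw [gaussianReal_of_var_ne_zero _ hv, restrict_withDensity hs,
    lintegral_withDensity_eq_lintegral_mul _ (measurable_gaussianPDF _ _) rnmRatio_measurable]
  simp_rw [Pi.mul_apply, rnm_pdf_mul _ hv]
  rw [gaussianReal_apply _ hv s]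

lemma rnm_moment (α : ℝ) (hv : v ≠ 0) :
    ∫⁻ x, (rnmRatio v x) ^ α ∂(gaussianReal 0 v)
      = ENNReal.ofReal (Real.exp (2 * α * (α - 1) / (v : ℝ))) := by
  have hv' : (0 : ℝ) < (v : ℝ) := by positivity
  have h1 : ∀ x : ℝ, (rnmRatio v x) ^ α
      = ENNReal.ofReal (Real.exp ((4 * x - 4) / (2 * (v : ℝ)) * α)) := by
    intro x
    rw [rnmRatio, ENNReal.ofReal_rpow_of_pos (Real.exp_pos _),
      Real.rpow_def_of_pos (Real.exp_pos _), Real.log_exp]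
  simp_rw [h1]
  rw [gaussianReal_of_var_ne_zero _ hv,
    lintegral_withDensity_eq_lintegral_mul _ (measurable_gaussianPDF _ _) (by fun_prop)]
  have hreal : ∀ x : ℝ, gaussianPDFReal 0 v x * Real.exp ((4 * x - 4) / (2 * (v : ℝ)) * α)
      = Real.exp (2 * α * (α - 1) / (v : ℝ)) * gaussianPDFReal (2 * α) v x := by
    intro x
    rw [gaussianPDFReal, gaussianPDFReal, mul_assoc, ← Real.exp_add, mul_left_comm,
      ← Real.exp_add]
    congr 1
    field_simp
    ring
  have h2 : ∀ x : ℝ, (gaussianPDF 0 v * fun x =>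
      ENNReal.ofReal (Real.exp ((4 * x - 4) / (2 * (v : ℝ)) * α))) x
      = ENNReal.ofReal (Real.exp (2 * α * (α - 1) / (v : ℝ))) * gaussianPDF (2 * α) v x := by
    intro x
    simp only [Pi.mul_apply, gaussianPDF]
    rw [← ENNReal.ofReal_mul (gaussianPDFReal_nonneg _ _ _),
      ← ENNReal.ofReal_mul (Real.exp_nonneg _), hreal x]
  simp_rw [h2]
  rw [lintegral_const_mul _ (measurable_gaussianPDF _ _), lintegral_gaussianPDF_eq_one _ hv,
    mul_one]

end OneDim

/-- Hölder step: `(μ.withDensity f) B ≤ (∫⁻ f^α)^(1/α) * (μ B)^((α-1)/α)`. -/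
lemma rnm_holder {X : Type*} [MeasurableSpace X] (μ : Measure X) {f : X → ℝ≥0∞}
    (hf : Measurable f) {B : Set X} (hB : MeasurableSet B) {α : ℝ} (hα : 1 < α) :
    (μ.withDensity f) B ≤ (∫⁻ x, f x ^ α ∂μ) ^ (1 / α) * (μ B) ^ ((α - 1) / α) := by
  have hpq := Real.HolderConjugate.conjExponent hα
  have hα0 : α ≠ 0 := by positivity
  have hα1 : α - 1 ≠ 0 := sub_ne_zero.2 hα.ne'
  have hq : 1 / Real.conjExponent α = (α - 1) / α := by
    rw [Real.conjExponent]
    field_simp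
  have key := ENNReal.lintegral_mul_le_Lp_mul_Lq μ (f := f)
    (g := B.indicator fun _ => (1 : ℝ≥0∞)) hpq hf.aemeasurable
    ((measurable_const.indicator hB).aemeasurable)
  have h1 : (μ.withDensity f) B = ∫⁻ x, (f * B.indicator fun _ => (1 : ℝ≥0∞)) x ∂μ := by
    rw [withDensity_apply _ hB, ← lintegral_indicator hB f]
    congr 1
    funext x
    by_cases hx : x ∈ B <;> simp [hx]
  have h2 : ∀ x, (B.indicator (fun _ => (1 : ℝ≥0∞)) x) ^ Real.conjExponent α
      = B.indicator (fun _ => (1 : ℝ≥0∞)) x := by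
    intro x
    by_cases hx : x ∈ B
    · simp [hx]
    · simp [hx, ENNReal.zero_rpow_of_pos hpq.symm.pos]
  rw [h1]
  calc ∫⁻ x, (f * B.indicator fun _ => (1 : ℝ≥0∞)) x ∂μ
      ≤ (∫⁻ x, f x ^ α ∂μ) ^ (1 / α)
        * (∫⁻ x, (B.indicator (fun _ => (1 : ℝ≥0∞)) x) ^ Real.conjExponent α ∂μ)
          ^ (1 / Real.conjExponent α) := key
    _ = (∫⁻ x, f x ^ α ∂μ) ^ (1 / α) * (μ B) ^ ((α - 1) / α) := by
        simp_rw [h2]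
        have hone : ∫⁻ x, B.indicator (fun _ => (1 : ℝ≥0∞)) x ∂μ = μ B := by
          simp [lintegral_indicator hB]
        rw [hone, hq]

theorem rnm_gaussian_rdp {m : ℕ} (hm : 1 ≤ m) (α σ : ℝ) (hα : 1 < α) (hσ : 0 < σ)
    (C C' : Fin m → ℝ) (hCC' : ∀ i, |C i - C' i| ≤ 1) :
    ∑ i : Fin m,
        ((Measure.pi fun _ : Fin m => gaussianReal 0 ⟨σ ^ 2, sq_nonneg σ⟩)
            {r : Fin m → ℝ | ∀ j, j ≠ i → C i + r i > C j + r j}).toReal ^ α *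
          ((Measure.pi fun _ : Fin m => gaussianReal 0 ⟨σ ^ 2, sq_nonneg σ⟩)
            {r : Fin m → ℝ | ∀ j, j ≠ i → C' i + r i > C' j + r j}).toReal ^ (1 - α) ≤
      m * Real.exp (2 * α * (α - 1) / σ ^ 2) := by
  set v : ℝ≥0 := ⟨σ ^ 2, sq_nonneg σ⟩ with hvdef
  have hvr : (v : ℝ) = σ ^ 2 := rfl
  have hσ2 : (0 : ℝ) < σ ^ 2 := by positivity
  have hv : v ≠ 0 := by
    intro h
    have h0 : (v : ℝ) = 0 := by rw [h]; simp
    rw [hvr] at h0; linarith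
  set μm : Measure (Fin m → ℝ) := Measure.pi fun _ : Fin m => gaussianReal 0 v with hμm
  set K : ℝ := Real.exp (2 * α * (α - 1) / σ ^ 2) with hK
  have hKpos : 0 < K := Real.exp_pos _
  have hα0 : (0 : ℝ) < α := lt_trans one_pos hα
  have hα1 : (0 : ℝ) < α - 1 := sub_pos.2 hα
  -- measurability of the argmax events
  have hmeas : ∀ (D : Fin m → ℝ) (i : Fin m),
      MeasurableSet {r : Fin m → ℝ | ∀ j, j ≠ i → D i + r i > D j + r j} := by
    intro D i
    have hrw : {r : Fin m → ℝ | ∀ j, j ≠ i → D i + r i > D j + r j}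
        = ⋂ j, ⋂ (_ : j ≠ i), {r : Fin m → ℝ | D j + r j < D i + r i} := by
      ext r
      simp only [Set.mem_setOf_eq, Set.mem_iInter]
    rw [hrw]
    refine MeasurableSet.iInter fun j => MeasurableSet.iInter fun _ => ?_
    exact measurableSet_lt (measurable_const.add (measurable_pi_apply j))
      (measurable_const.add (measurable_pi_apply i))
  have key : ∀ i : Fin m,
      (μm {r : Fin m → ℝ | ∀ j, j ≠ i → C i + r i > C j + r j}).toReal ^ α *
        (μm {r : Fin m → ℝ | ∀ j, j ≠ i → C' i + r i > C' j + r j}).toReal ^ (1 - α) ≤ K := by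
    intro i
    have hA : MeasurableSet {r : Fin m → ℝ | ∀ j, j ≠ i → C i + r i > C j + r j} := hmeas C i
    have hB : MeasurableSet {r : Fin m → ℝ | ∀ j, j ≠ i → C' i + r i > C' j + r j} := hmeas C' i
    set A := {r : Fin m → ℝ | ∀ j, j ≠ i → C i + r i > C j + r j} with hAdef
    set B := {r : Fin m → ℝ | ∀ j, j ≠ i → C' i + r i > C' j + r j} with hBdef
    set S : (Fin m → ℝ) → (Fin m → ℝ) := fun r j => r j + (if j = i then (2:ℝ) else 0)
      with hSdef
    -- the shift is measure preserving onto the shifted product measure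
    have hmp : MeasurePreserving S μm
        (Measure.pi fun j => gaussianReal (if j = i then (2:ℝ) else 0) v) := by
      refine measurePreserving_pi _ _ fun j => ⟨measurable_add_const _, ?_⟩
      rw [gaussianReal_map_add_const, zero_add]
    have hsub : A ⊆ S ⁻¹' B := by
      intro r hr
      intro j hj
      have hri : S r i = r i + 2 := by simp [hSdef]
      have hrj : S r j = r j := by simp [hSdef, hj]
      have h3 : C i + r i > C j + r j := hr j hj
      have h1 := abs_le.1 (hCC' i)
      have h2 := abs_le.1 (hCC' j)
      show C' i + S r i > C' j + S r j
      rw [hri, hrj]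
      linarith
    have step1 : μm A ≤ (Measure.pi fun j => gaussianReal (if j = i then (2:ℝ) else 0) v) B := by
      have hmap := Measure.map_apply (μ := μm) hmp.measurable hB
      rw [hmp.map_eq] at hmap
      exact le_of_le_of_eq (measure_mono hsub) hmap.symm
    -- the shifted product measure has density `rnmRatio v (r i)` w.r.t. `μm`
    have hdens : (Measure.pi fun j => gaussianReal (if j = i then (2:ℝ) else 0) v)
        = μm.withDensity fun r => rnmRatio v (r i) := by
      refine Measure.pi_eq fun s hs => ?_
      have hpis : MeasurableSet (Set.univ.pi s) := MeasurableSet.univ_pi hs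
      rw [withDensity_apply _ hpis, ← lintegral_indicator hpis]
      have hptw : ∀ r : Fin m → ℝ,
          (Set.univ.pi s).indicator (fun r : Fin m → ℝ => rnmRatio v (r i)) r
            = ∏ j, ((s j).indicator fun x => if j = i then rnmRatio v x else 1) (r j) := by
        intro r
        by_cases hr : r ∈ Set.univ.pi s
        · rw [Set.indicator_of_mem hr]
          have hin : ∀ j, ((s j).indicator fun x => if j = i then rnmRatio v x else 1) (r j)
              = if j = i then rnmRatio v (r j) else 1 := fun j =>
            Set.indicator_of_mem (hr j (Set.mem_univ j)) _
          simp_rw [hin]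
          rw [Finset.prod_ite_eq' Finset.univ i fun j => rnmRatio v (r j)]
          simp
        · rw [Set.indicator_of_notMem hr]
          have : ∃ j, r j ∉ s j := by
            by_contra hcon
            push_neg at hcon
            exact hr fun j _ => hcon j
          obtain ⟨j, hj⟩ := this
          exact (Finset.prod_eq_zero (Finset.mem_univ j)
            (Set.indicator_of_notMem hj _)).symm
      simp_rw [hptw]
      rw [rnm_lintegral_pi_prod (fun _ : Fin m => gaussianReal 0 v)
        (fun j => (s j).indicator fun x => if j = i then rnmRatio v x else 1)
        (fun j => Measurable.indicator (by
          by_cases hj : j = i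
          · simp only [hj, if_true]
            exact rnmRatio_measurable
          · simp only [hj, if_false]
            exact measurable_const) (hs j))]
      refine Finset.prod_congr rfl fun j _ => ?_
      by_cases hj : j = i
      · subst hj
        have hfun : (fun x : ℝ => if j = j then rnmRatio v x else 1) = rnmRatio v := by
          simp
        rw [hfun, lintegral_indicator (hs j), rnm_set_lintegral_ratio (hs j) hv]
        simp
      · have hfun : (fun x : ℝ => if j = i then rnmRatio v x else 1)
            = fun _ : ℝ => (1 : ℝ≥0∞) := by
          simp [hj]
        rw [hfun, lintegral_indicator (hs j)]
        simp [hj]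
    -- the α-moment of the density
    have hMi : ∫⁻ r : Fin m → ℝ, rnmRatio v (r i) ^ α ∂μm = ENNReal.ofReal K := by
      have hmeasj : ∀ j : Fin m,
          Measurable fun x : ℝ => if j = i then rnmRatio v x ^ α else 1 := by
        intro j
        by_cases hj : j = i
        · simp only [hj, if_true]
          exact rnmRatio_measurable.pow_const _
        · simp only [hj, if_false]
          exact measurable_const
      have hprod := rnm_lintegral_pi_prod (fun _ : Fin m => gaussianReal 0 v)
        (fun j x => if j = i then rnmRatio v x ^ α else 1) hmeasj
      have hL : (fun r : Fin m → ℝ => rnmRatio v (r i) ^ α)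
          = fun r : Fin m → ℝ =>
            ∏ j, (fun (j : Fin m) (x : ℝ) => if j = i then rnmRatio v x ^ α else 1) j (r j) := by
        funext r
        simp only []
        rw [Finset.prod_ite_eq' Finset.univ i fun j => rnmRatio v (r j) ^ α]
        simp
      rw [hL, hprod]
      have hfac : ∀ j : Fin m,
          ∫⁻ x : ℝ, (fun (j : Fin m) (x : ℝ) => if j = i then rnmRatio v x ^ α else 1) j x
              ∂gaussianReal 0 v
            = if j = i then ENNReal.ofReal K else 1 := by
        intro j
        by_cases hj : j = i
        · simp only [hj, if_true]
          rw [rnm_moment α hv, hvr]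
        · simp only [hj, if_false]
          simp
      simp_rw [hfac]
      rw [Finset.prod_ite_eq' Finset.univ i fun _ => ENNReal.ofReal K]
      simp
    -- Hölder step
    have step2 : (Measure.pi fun j => gaussianReal (if j = i then (2:ℝ) else 0) v) B
        ≤ ENNReal.ofReal K ^ (1 / α) * (μm B) ^ ((α - 1) / α) := by
      rw [hdens]
      have hfmeas : Measurable fun r : Fin m → ℝ => rnmRatio v (r i) :=
        rnmRatio_measurable.comp (measurable_pi_apply i)
      have hh := rnm_holder μm hfmeas hB hα
      rwa [hMi] at hh
    have hPN : μm A ≤ ENNReal.ofReal K ^ (1 / α) * (μm B) ^ ((α - 1) / α) :=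
      le_trans step1 step2
    -- pass to real numbers
    have hQtop : μm B ≠ ⊤ := measure_ne_top _ _
    have hPtop : μm A ≠ ⊤ := measure_ne_top _ _
    by_cases hQ0 : μm B = 0
    · have hP0 : μm A = 0 := by
        refine le_antisymm ?_ zero_le
        calc μm A ≤ ENNReal.ofReal K ^ (1 / α) * (μm B) ^ ((α - 1) / α) := hPN
          _ = 0 := by
            rw [hQ0, ENNReal.zero_rpow_of_pos (by positivity)]
            simp
      rw [hP0, hQ0]
      simp only [ENNReal.toReal_zero]
      rw [Real.zero_rpow (ne_of_gt hα0), zero_mul]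
      exact le_of_lt hKpos
    · have hq : 0 < (μm B).toReal := ENNReal.toReal_pos hQ0 hQtop
      have hp : 0 ≤ (μm A).toReal := ENNReal.toReal_nonneg
      have hRfin : ENNReal.ofReal K ^ (1 / α) * (μm B) ^ ((α - 1) / α) ≠ ⊤ := by
        refine ENNReal.mul_ne_top ?_ ?_
        · exact ENNReal.rpow_ne_top_of_nonneg (by positivity) ENNReal.ofReal_ne_top
        · exact ENNReal.rpow_ne_top_of_nonneg (by positivity) hQtop
      have hreal : (μm A).toReal ≤ K ^ (1 / α) * (μm B).toReal ^ ((α - 1) / α) := by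
        have := ENNReal.toReal_mono hRfin hPN
        rwa [ENNReal.toReal_mul, ← ENNReal.toReal_rpow, ← ENNReal.toReal_rpow,
          ENNReal.toReal_ofReal (le_of_lt hKpos)] at this
      have hpα : (μm A).toReal ^ α ≤ K * (μm B).toReal ^ (α - 1) := by
        calc (μm A).toReal ^ α
            ≤ (K ^ (1 / α) * (μm B).toReal ^ ((α - 1) / α)) ^ α :=
              Real.rpow_le_rpow hp hreal (le_of_lt hα0)
          _ = K * (μm B).toReal ^ (α - 1) := by
              rw [Real.mul_rpow (by positivity) (by positivity)]
              rw [← Real.rpow_mul (le_of_lt hKpos), ← Real.rpow_mul (le_of_lt hq)]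
              rw [one_div_mul_cancel (ne_of_gt hα0), Real.rpow_one,
                div_mul_cancel₀ _ (ne_of_gt hα0)]
      calc (μm A).toReal ^ α * (μm B).toReal ^ (1 - α)
          ≤ (K * (μm B).toReal ^ (α - 1)) * (μm B).toReal ^ (1 - α) :=
            mul_le_mul_of_nonneg_right hpα (Real.rpow_nonneg (le_of_lt hq) (1 - α))
        _ = K := by
            rw [mul_assoc, ← Real.rpow_add hq]
            norm_num
    -- final summation
  calc ∑ i : Fin m,
      (μm {r : Fin m → ℝ | ∀ j, j ≠ i → C i + r i > C j + r j}).toReal ^ α *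
        (μm {r : Fin m → ℝ | ∀ j, j ≠ i → C' i + r i > C' j + r j}).toReal ^ (1 - α)
      ≤ ∑ _i : Fin m, K := Finset.sum_le_sum fun i _ => key i
    _ = m * K := by
        rw [Finset.sum_const, Finset.card_univ, Fintype.card_fin, nsmul_eq_mul]
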